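/- Let t_1, ..., t_N be complex numbers in the open unit disk. Define t_σ for a reduced word σ in the free group F_N multiplicatively via t_{i^k} = t_i^k for k ≥ 0 and t_{i^{-k}} = conj(t_i)^k, extended to products of syllables. Let φ be the induced linear functional on the free *-algebra in X_1,...,X_N with φ(X_σ^+ X_τ) = t_{σ^{-1}τ} for words σ, τ in the free monoid F_N^+. Then the polynomials φ_k = (1/√(1−|t_k|²))(X_k − t_k) for k = 1,...,N, and φ_{σk} = X_σ φ_k for σ ∈ F_N^+, satisfy the orthonormality conditions φ(φ_{σ}^+ φ_{σ}) = 1 and φ(X_τ^+ φ_σ) = 0 for all words τ strictly preceding σ in lexicographic order. -/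

import Mathlib

open scoped ComplexConjugate

/-- The multiplicative extension of `t` to reduced words of the free group:
`t_{i} = t i`, `t_{i⁻¹} = conj (t i)`, extended over the letters of the reduced word. -/
noncomputable def twt {N : ℕ} (t : Fin N → ℂ) (w : FreeGroup (Fin N)) : ℂ :=
  ((FreeGroup.toWord w).map fun p => if p.2 then t p.1 else conj (t p.1)).prod

/-- The embedding of the free monoid on `N` generators (words = lists) into the free group. -/
def wordEmb {N : ℕ} (σ : List (Fin N)) : FreeGroup (Fin N) :=
  (σ.map FreeGroup.of).prod

/-- The moment kernel `K(σ,τ) = φ(X_σ⁺ X_τ) = t_{σ⁻¹τ}` of the functional `φ`. -/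
noncomputable def momK {N : ℕ} (t : Fin N → ℂ) (σ τ : List (Fin N)) : ℂ :=
  twt t ((wordEmb σ)⁻¹ * wordEmb τ)

/-- The (graded) lexicographic order on the free monoid `F_N⁺`. -/
def gLexLt {N : ℕ} (τ σ : List (Fin N)) : Prop :=
  τ.length < σ.length ∨ (τ.length = σ.length ∧ List.Lex (· < ·) τ σ)

lemma chain'_all {α : Type*} {R : α → α → Prop} (h : ∀ a b, R a b) :
    ∀ l : List α, List.Chain' R l
  | [] => List.isChain_nil
  | [_] => List.isChain_singleton _
  | a :: b :: l => (List.isChain_cons_cons.2 ⟨h a b, chain'_all h (b :: l)⟩)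

lemma reduce_chain {α : Type*} [DecidableEq α] :
    ∀ {L : List (α × Bool)},
      List.Chain' (fun a b => ¬(a.1 = b.1 ∧ a.2 = !b.2)) L → FreeGroup.reduce L = L := by
  intro L hL
  induction L with
  | nil => rfl
  | cons x L ih =>
    rw [List.Chain', List.isChain_cons] at hL
    rw [FreeGroup.reduce.cons, ih hL.2]
    cases L with
    | nil => rfl
    | cons y ys =>
      have := hL.1 y rfl
      simp only [if_neg this]

lemma wordEmb_cons {N : ℕ} (a : Fin N) (σ : List (Fin N)) :
    wordEmb (a :: σ) = FreeGroup.of a * wordEmb σ := by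
  simp [wordEmb]

lemma wordEmb_eq_mk {N : ℕ} (σ : List (Fin N)) :
    wordEmb σ = FreeGroup.mk (σ.map fun a => (a, true)) := by
  induction σ with
  | nil => simp [wordEmb, FreeGroup.one_eq_mk]
  | cons a σ ih =>
    rw [wordEmb_cons, ih, FreeGroup.of, FreeGroup.mul_mk]
    rfl

lemma toWord_mixed {N : ℕ} (τ σ : List (Fin N))
    (h : ∀ a b, τ.head? = some a → σ.head? = some b → a ≠ b) :
    FreeGroup.toWord ((wordEmb τ)⁻¹ * wordEmb σ)
      = (τ.map (fun a => (a, false))).reverse ++ σ.map (fun a => (a, true)) := by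
  rw [wordEmb_eq_mk, wordEmb_eq_mk, FreeGroup.inv_mk, FreeGroup.mul_mk, FreeGroup.toWord_mk]
  have hinv : FreeGroup.invRev (τ.map fun a => (a, true))
      = (τ.map (fun a => (a, false))).reverse := by
    simp [FreeGroup.invRev, List.map_map, Function.comp]
  rw [hinv]
  apply reduce_chain
  rw [List.Chain', List.isChain_append]
  refine ⟨List.isChain_reverse.2 ((List.isChain_map _).2 (chain'_all (fun a b => by simp [flip]) _)),
    (List.isChain_map _).2 (chain'_all (fun a b => by simp [flip]) _), ?_⟩
  intro x hx y hy
  simp only [List.getLast?_reverse, List.head?_map, Option.mem_def, Option.map_eq_some_iff] at hx hy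
  obtain ⟨a, ha, rfl⟩ := hx
  obtain ⟨b, hb, rfl⟩ := hy
  simp [h a b ha hb]


lemma momK_eq {N : ℕ} (t : Fin N → ℂ) (τ σ : List (Fin N))
    (h : ∀ a b, τ.head? = some a → σ.head? = some b → a ≠ b) :
    momK t τ σ = conj ((τ.map t).prod) * ((σ.map t).prod) := by
  rw [momK, twt, toWord_mixed τ σ h]
  rw [List.map_append, List.prod_append, List.map_reverse, List.prod_reverse,
    List.map_map, List.map_map]
  rw [map_list_prod (starRingEnd ℂ), List.map_map]
  congr 1

lemma momK_cons {N : ℕ} (t : Fin N → ℂ) (a : Fin N) (τ σ : List (Fin N)) :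
    momK t (a :: τ) (a :: σ) = momK t τ σ := by
  rw [momK, momK, wordEmb_cons, wordEmb_cons]
  congr 1
  group

lemma momK_prefix {N : ℕ} (t : Fin N → ℂ) (p τ σ : List (Fin N)) :
    momK t (p ++ τ) (p ++ σ) = momK t τ σ := by
  induction p with
  | nil => rfl
  | cons a p ih => rw [List.cons_append, List.cons_append, momK_cons, ih]

lemma momK_key {N : ℕ} (t : Fin N → ℂ) :
    ∀ (σ τ : List (Fin N)) (k : Fin N), gLexLt τ (σ ++ [k]) →
      momK t τ (σ ++ [k]) = t k * momK t τ σ := by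
  intro σ
  induction σ with
  | nil =>
    rintro (_ | ⟨a, τ'⟩) k h <;> simp only [List.nil_append] at h ⊢
    · rw [momK_eq t [] [k] (by simp), momK_eq t [] [] (by simp)]
      simp
    · have hτ' : τ' = [] := by
        rcases h with h | ⟨h, _⟩ <;> simp at h <;> simp [h]
      subst hτ'
      have hak : a ≠ k := by
        rcases h with h | ⟨_, h⟩
        · simp at h
        · cases h with
          | rel hr => exact ne_of_lt hr
          | cons hc => exact absurd hc (fun h => nomatch h)
      rw [momK_eq t [a] [k] (by simpa using hak), momK_eq t [a] [] (by simp)]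
      simp; ring
  | cons b σ' ih =>
    rintro (_ | ⟨a, τ'⟩) k h
    · rw [momK_eq t [] ((b :: σ') ++ [k]) (by simp), momK_eq t [] (b :: σ') (by simp)]
      simp; ring
    · by_cases hab : a = b
      · subst hab
        rw [show (a :: σ') ++ [k] = a :: (σ' ++ [k]) from rfl, momK_cons, momK_cons]
        apply ih
        rcases h with h | ⟨h, hlex⟩
        · left; simpa using h
        · right
          refine ⟨by simpa using h, ?_⟩
          cases hlex with
          | cons hl => exact hl
          | rel hr => exact absurd hr (lt_irrefl a)
      · rw [momK_eq t (a :: τ') ((b :: σ') ++ [k]) (by simpa using hab),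
          momK_eq t (a :: τ') (b :: σ') (by simpa using hab)]
        simp; ring

/-- For `t_1, …, t_N` in the open unit disk and `φ` the induced functional with
`φ(X_σ⁺ X_τ) = t_{σ⁻¹τ}`, the polynomials `φ_k = (1/√(1-|t_k|²))(X_k - t_k)` and
`φ_{σk} = X_σ φ_k` are orthonormal: `φ(φ_{σk}⁺ φ_{σk}) = 1` (first conjunct, expanded
by linearity of `φ`, including the normalizing factor `1/(1-|t_k|²)`), and
`φ(X_τ⁺ φ_{σk}) = 0` for every word `τ` strictly preceding `σk` in lexicographic order
(second conjunct, again expanded by linearity). -/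
theorem stmt6 {N : ℕ} (t : Fin N → ℂ) (ht : ∀ k, ‖t k‖ < 1) :
    (∀ (σ : List (Fin N)) (k : Fin N),
      ((1 : ℂ) - (‖t k‖ : ℂ) ^ 2)⁻¹ *
        (momK t (σ ++ [k]) (σ ++ [k]) - t k * momK t (σ ++ [k]) σ
          - conj (t k) * momK t σ (σ ++ [k]) + (‖t k‖ : ℂ) ^ 2 * momK t σ σ) = 1) ∧
    (∀ (σ : List (Fin N)) (k : Fin N) (τ : List (Fin N)), gLexLt τ (σ ++ [k]) →
      momK t τ (σ ++ [k]) - t k * momK t τ σ = 0) := by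
  constructor
  · intro σ k
    have h1 : momK t (σ ++ [k]) (σ ++ [k]) = 1 := by
      have := momK_prefix t (σ ++ [k]) [] []
      simpa [momK_eq t [] [] (by simp)] using this
    have h2 : momK t (σ ++ [k]) σ = conj (t k) := by
      have := momK_prefix t σ [k] []
      simp only [List.append_nil] at this
      rw [this, momK_eq t [k] [] (by simp)]
      simp
    have h3 : momK t σ (σ ++ [k]) = t k := by
      have := momK_prefix t σ [] [k]
      simp only [List.append_nil] at this
      rw [this, momK_eq t [] [k] (by simp)]
      simp
    have h4 : momK t σ σ = 1 := by
      have := momK_prefix t σ [] []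
      simpa [momK_eq t [] [] (by simp)] using this
    rw [h1, h2, h3, h4]
    have hm : ((‖t k‖ : ℂ)) ^ 2 = t k * conj (t k) := by
      rw [Complex.mul_conj]
      norm_cast
      rw [Complex.sq_norm]
    have hne : (1 : ℂ) - (‖t k‖ : ℂ) ^ 2 ≠ 0 := by
      have h2 : ‖t k‖ ^ 2 < 1 := by
        nlinarith [norm_nonneg (t k), ht k]
      have he : (1:ℂ) - (‖t k‖:ℂ) ^ 2 = ((1 - ‖t k‖ ^ 2 : ℝ) : ℂ) := by push_cast; ring
      rw [he]
      exact Complex.ofReal_ne_zero.2 (by linarith)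
    have : 1 - t k * conj (t k) - conj (t k) * t k + (‖t k‖:ℂ) ^ 2 * 1
        = 1 - (‖t k‖:ℂ) ^ 2 := by rw [hm]; ring
    rw [this, inv_mul_cancel₀ hne]
  · intro σ k τ h
    rw [momK_key t σ τ k h, sub_self]
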